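/- For a finite poset (P,<), the integer points of the order polytope O(P,<) are exactly the indicator functions of order ideals of (P,<), and each such integer point is a vertex of O(P,<). -/

import Mathlib

/-- The order polytope of a (strict) order relation `lt` on a finite set `P`. -/
def orderPolytope {P : Type*} [Fintype P] (lt : P → P → Prop) : Set (P → ℝ) :=
  {x | (∀ p, 0 ≤ x p ∧ x p ≤ 1) ∧ ∀ p q, lt p q → x q ≤ x p}

/-- `J` is an order ideal (lower set) for the strict order `lt`. -/
def isOrderIdeal {P : Type*} (lt : P → P → Prop) (J : Set P) : Prop :=
  ∀ ⦃p q : P⦄, p ∈ J → lt q p → q ∈ J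

lemma zero_or_one_aux {P : Type*} [Fintype P] (lt : P → P → Prop) (x : P → ℝ)
    (hx : x ∈ orderPolytope lt ∧ ∀ p, ∃ m : ℤ, x p = m) (p : P) :
    x p = 0 ∨ x p = 1 := by
  obtain ⟨⟨hb, _⟩, hint⟩ := hx
  obtain ⟨m, hm⟩ := hint p
  obtain ⟨h0, h1⟩ := hb p
  rw [hm] at h0 h1 ⊢
  have : m = 0 ∨ m = 1 := by
    have h0' : (0 : ℤ) ≤ m := by exact_mod_cast h0
    have h1' : m ≤ 1 := by exact_mod_cast h1
    omega
  rcases this with h | h <;> simp [h]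

/-- The integer points of the order polytope `O(P,<)` are exactly the indicator
functions of order ideals of `(P,<)`, and each such point is a vertex (extreme point)
of `O(P,<)`. -/
theorem stmt8 {P : Type*} [Fintype P] (lt : P → P → Prop) (h : IsStrictOrder P lt) :
    (∀ x : P → ℝ, (x ∈ orderPolytope lt ∧ ∀ p, ∃ m : ℤ, x p = m) ↔
      ∃ J : Set P, isOrderIdeal lt J ∧ x = J.indicator (fun _ => (1 : ℝ))) ∧
    ∀ x : P → ℝ, (x ∈ orderPolytope lt ∧ ∀ p, ∃ m : ℤ, x p = m) →
      x ∈ Set.extremePoints ℝ (orderPolytope lt) := by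
  classical
  constructor
  · intro x
    constructor
    · intro hx
      have h01 := zero_or_one_aux lt x hx
      obtain ⟨⟨hb, hmono⟩, _⟩ := hx
      refine ⟨{p | x p = 1}, ?_, ?_⟩
      · intro p q hp hqp
        have := hmono q p hqp
        have hq := (hb q).2
        rcases h01 q with h0 | h1
        · simp only [Set.mem_setOf_eq] at hp; rw [hp, h0] at this; linarith
        · exact h1
      · funext p
        rcases h01 p with h0 | h1
        · rw [h0, Set.indicator_apply]
          simp [Set.mem_setOf_eq, h0]
        · rw [h1, Set.indicator_apply]
          simp [Set.mem_setOf_eq, h1]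
    · rintro ⟨J, hJ, rfl⟩
      refine ⟨⟨fun p => ?_, fun p q hpq => ?_⟩, fun p => ?_⟩
      · rw [Set.indicator_apply]; split <;> norm_num
      · rw [Set.indicator_apply, Set.indicator_apply]
        by_cases hq : q ∈ J
        · have hp : p ∈ J := hJ hq hpq
          simp [hp, hq]
        · simp only [hq, if_false]
          split <;> norm_num
      · rw [Set.indicator_apply]
        split
        · exact ⟨1, by norm_num⟩
        · exact ⟨0, by norm_num⟩
  · intro x hx
    have h01 := zero_or_one_aux lt x hx
    refine ⟨hx.1, ?_⟩
    intro x₁ hx₁ x₂ hx₂ hseg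
    obtain ⟨a, b, ha, hb, hab, hsum⟩ := hseg
    have key : ∀ p, x₁ p = x p ∧ x₂ p = x p := by
      intro p
      have hp : a * x₁ p + b * x₂ p = x p := by
        have := congrFun hsum p
        simpa using this
      have hb1 := hx₁.1 p
      have hb2 := hx₂.1 p
      rcases h01 p with h0 | h1
      · rw [h0] at hp ⊢
        constructor <;> nlinarith [hb1.1, hb2.1]
      · rw [h1] at hp ⊢
        constructor <;> nlinarith [hb1.2, hb2.2]
    exact funext fun p => (key p).1
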